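/- arXiv:1304.5511 — 7 statements merged into one kernel-verified Lean document; each statement's English description precedes it below -/
import Mathlib

section
/- Let K be a compact subset of the unit circle T with positive one-dimensional Lebesgue measure. If f and g are continuous functions on the closed unit disc, holomorphic on the open unit disc, and f = g on K, then f = g on the whole closed disc. -/
open Complex Metric Set MeasureTheory Function Pointwise


lemma exp_shift (x : ℝ) (j : ℤ) :
    Complex.exp ((↑(x + 2*Real.pi*j) : ℂ) * Complex.I) = Complex.exp ((x:ℂ) * Complex.I) := by
  push_cast
  rw [add_mul, Complex.exp_add]
  have h : ((2:ℂ)*(Real.pi:ℂ)*(j:ℂ)) * Complex.I = (j:ℂ) * (2*(Real.pi:ℂ)*Complex.I) := by ring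
  rw [h, Complex.exp_int_mul_two_pi_mul_I, mul_one]

lemma pos_in_period (S : Set ℝ) (hper : ∀ x ∈ S, ∀ j : ℤ, x + 2*Real.pi*j ∈ S)
    (hpos : 0 < volume S) : 0 < volume (S ∩ Ioo 0 (2*Real.pi)) := by
  by_contra hcon
  push_neg at hcon
  have h0 : volume (S ∩ Ioo 0 (2*Real.pi)) = 0 := le_antisymm hcon zero_le
  have hIco : volume (S ∩ Ico 0 (2*Real.pi)) = 0 := by
    have hsub : S ∩ Ico 0 (2*Real.pi) ⊆ (S ∩ Ioo 0 (2*Real.pi)) ∪ {0} := by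
      rintro x ⟨hxS, hx0, hx2⟩
      rcases eq_or_lt_of_le hx0 with h | h
      · exact Or.inr (by simp [← h])
      · exact Or.inl ⟨hxS, h, hx2⟩
    refine le_antisymm ?_ zero_le
    calc volume (S ∩ Ico 0 (2*Real.pi)) ≤ volume ((S ∩ Ioo 0 (2*Real.pi)) ∪ {0}) :=
          measure_mono hsub
      _ ≤ volume (S ∩ Ioo 0 (2*Real.pi)) + volume ({0} : Set ℝ) := measure_union_le _ _
      _ = 0 := by simp [h0]
  have hcover : S ⊆ ⋃ j : ℤ, ((2*Real.pi*j : ℝ) +ᵥ (S ∩ Ico 0 (2*Real.pi))) := by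
    intro x hx
    have hπ : (0:ℝ) < 2*Real.pi := by positivity
    set b := toIcoMod hπ 0 x with hb
    have hmem : b ∈ Ico (0:ℝ) (0 + 2*Real.pi) := toIcoMod_mem_Ico hπ 0 x
    have hedec : b = x - toIcoDiv hπ 0 x • (2*Real.pi) := rfl
    set j : ℤ := toIcoDiv hπ 0 x with hj
    have hxb : x = 2*Real.pi*j + b := by
      rw [hedec]; simp [zsmul_eq_mul]; ring
    have hbS : b ∈ S := by
      have := hper x hx (-j)
      have heq : x + 2*Real.pi*(-j : ℤ) = b := by push_cast; rw [hxb]; ring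
      rwa [heq] at this
    refine mem_iUnion.mpr ⟨j, ?_⟩
    rw [Set.mem_vadd_set]
    refine ⟨b, ⟨hbS, by simpa using hmem⟩, ?_⟩
    simp [vadd_eq_add, hxb.symm]
  have : volume S ≤ 0 := by
    calc volume S ≤ ∑' j : ℤ, volume ((2*Real.pi*j : ℝ) +ᵥ (S ∩ Ico 0 (2*Real.pi))) :=
          (measure_mono hcover).trans (measure_iUnion_le _)
      _ = ∑' _j : ℤ, volume (S ∩ Ico 0 (2*Real.pi)) := by
          congr 1; ext j; exact measure_vadd _ _ _
      _ = 0 := by simp [hIco]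
  exact absurd (lt_of_lt_of_le hpos this) (lt_irrefl _)


lemma counting (O : Set ℝ) (hper : ∀ x ∈ O, ∀ j : ℤ, x + 2*Real.pi*j ∈ O)
    (C : Set ℝ) (hCsub : C ⊆ Ioo 0 (2*Real.pi)) (ρ : ℝ)
    (hthick : ∀ x ∈ C, ∀ y : ℝ, |y - x| < ρ → y ∈ O)
    (N : ℕ) (hN : 0 < N) (hsρ : 2*Real.pi/N < ρ) (φ : ℝ) :
    ∃ G : Finset ℕ, G ⊆ Finset.range N ∧ (∀ k ∈ G, φ + (k:ℝ)*(2*Real.pi/N) ∈ O) ∧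
      volume C ≤ ENNReal.ofReal (2*(2*Real.pi/N)) * G.card := by
  classical
  have hπ : (0:ℝ) < Real.pi := Real.pi_pos
  set s : ℝ := 2*Real.pi/N with hs_def
  have hNR : (0:ℝ) < N := Nat.cast_pos.mpr hN
  have hs0 : (0:ℝ) < s := by rw [hs_def]; positivity
  have hNs : (N:ℝ) * s = 2*Real.pi := by rw [hs_def]; field_simp
  set m : ℝ → ℤ := fun x => ⌊(x - φ)/s⌋ with hm_def
  have key1 : ∀ x : ℝ, φ + (m x) * s ≤ x ∧ x < φ + ((m x) + 1) * s := by
    intro x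
    have h1 : ((m x : ℝ)) ≤ (x - φ)/s := Int.floor_le _
    have h2 : (x - φ)/s < (m x) + 1 := Int.lt_floor_add_one _
    constructor
    · nlinarith [(le_div_iff₀ hs0).mp h1]
    · nlinarith [(div_lt_iff₀ hs0).mp h2]
  set Good : Finset ℕ := (Finset.range N).filter (fun k : ℕ => φ + (k:ℝ)*s ∈ O) with hGood
  refine ⟨Good, Finset.filter_subset _ _, fun k hk => (Finset.mem_filter.mp hk).2, ?_⟩
  set T : ℕ → Set ℝ := fun k => {x | x ∈ Ioo 0 (2*Real.pi) ∧ (m x) % N = k} with hT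
  have hcov : C ⊆ ⋃ k ∈ Good, T k := by
    intro x hx
    set k : ℕ := ((m x) % N).toNat with hk
    have hmodnn : 0 ≤ (m x) % (N:ℤ) := Int.emod_nonneg _ (by exact_mod_cast hN.ne')
    have hmodlt : (m x) % (N:ℤ) < N := Int.emod_lt_of_pos _ (by exact_mod_cast hN)
    have hkcast : ((k:ℤ)) = (m x) % N := Int.toNat_of_nonneg hmodnn
    have hklt : k < N := by omega
    have hgx : φ + (m x) * s ∈ O := by
      refine hthick x hx _ ?_
      have h := key1 x
      rw [abs_sub_comm, _root_.abs_of_nonneg (by linarith [h.1])]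
      nlinarith [h.1, h.2]
    have hgood : φ + (k:ℝ)*s ∈ O := by
      have hdiv : (m x) = N * ((m x) / N) + (m x) % N := (Int.mul_ediv_add_emod _ _).symm
      have hcst : ((m x : ℝ)) = (N:ℝ) * (((m x)/N : ℤ) : ℝ) + ((k:ℤ) : ℝ) := by
        rw [hkcast]; exact_mod_cast congrArg (Int.cast : ℤ → ℝ) hdiv
      have heq : φ + (k:ℝ)*s = (φ + (m x)*s) + 2*Real.pi*((-((m x)/N) : ℤ) : ℝ) := by
        push_cast at hcst ⊢
        linear_combination (-s) * hcst + (-(((m x)/N : ℤ) : ℝ)) * hNs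
      rw [heq]
      exact hper _ hgx _
    refine mem_iUnion₂.mpr ⟨k, ?_, ?_⟩
    · rw [hGood]; exact Finset.mem_filter.mpr ⟨Finset.mem_range.mpr hklt, hgood⟩
    · exact ⟨hCsub hx, hkcast.symm⟩
  have hTk : ∀ k ∈ Good, volume (T k) ≤ ENNReal.ofReal (2*s) := by
    intro k hkG
    have hklt : k < N := Finset.mem_range.mp (Finset.mem_filter.mp hkG).1
    have hNz : ((N:ℤ)) ≠ 0 := by exact_mod_cast hN.ne'
    have hNpos : (0:ℤ) < N := by exact_mod_cast hN
    set m₀ : ℤ := ⌊(-φ)/s⌋ with hm₀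
    set n₁ : ℤ := m₀ + ((k : ℤ) - m₀) % N with hn₁
    have hrnn : 0 ≤ ((k:ℤ) - m₀) % N := Int.emod_nonneg _ hNz
    have hrlt : ((k:ℤ) - m₀) % N < N := Int.emod_lt_of_pos _ hNpos
    have hn₁mod : n₁ % N = k := by
      have h1 : n₁ % (N:ℤ) = (m₀ + ((k:ℤ) - m₀)) % N := by
        rw [hn₁, Int.add_emod, Int.emod_emod_of_dvd _ dvd_rfl, ← Int.add_emod]
      rw [h1]
      simp only [add_sub_cancel]
      exact Int.emod_eq_of_lt (by positivity) (by exact_mod_cast hklt)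
    have hsub2 : T k ⊆ Ico (φ + n₁*s) (φ + (n₁+1)*s) ∪
        Ico (φ + (n₁+(N:ℤ))*s) (φ + ((n₁+(N:ℤ))+1)*s) := by
      rintro x ⟨⟨hx0, hx2⟩, hxmod⟩
      have hml : m₀ ≤ m x := by
        apply Int.floor_le_floor
        gcongr
        linarith
      have hmu : m x ≤ m₀ + N := by
        have h2 : (x - φ)/s ≤ (-φ + (N:ℝ)*s)/s := by gcongr; linarith
        have h2' : (-φ + (N:ℝ)*s)/s = (-φ)/s + ((N:ℤ):ℝ) := by push_cast; field_simp
        rw [h2'] at h2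
        calc m x ≤ ⌊(-φ)/s + ((N:ℤ):ℝ)⌋ := Int.floor_le_floor h2
          _ = m₀ + N := by rw [Int.floor_add_intCast]
      have hdvd : (N:ℤ) ∣ (m x - n₁) := by
        apply Int.dvd_of_emod_eq_zero
        rw [Int.sub_emod, hxmod, hn₁mod, sub_self, Int.zero_emod]
      obtain ⟨t, ht⟩ := hdvd
      have hn₁l : m₀ ≤ n₁ := by omega
      have hn₁u : n₁ < m₀ + N := by omega
      have htu : t ≤ 1 := by
        have h1 : (N:ℤ)*t ≤ N*1 := by omega
        exact le_of_mul_le_mul_left h1 hNpos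
      have htl : (0:ℤ) ≤ t := by
        have h2 : (N:ℤ)*(-1) < N*t := by omega
        have := lt_of_mul_lt_mul_left h2 (le_of_lt hNpos)
        omega
      have hkey := key1 x
      have ht01 : t = 0 ∨ t = 1 := by omega
      have hcase : m x = n₁ ∨ m x = n₁ + N := by
        rcases ht01 with h | h <;> simp [h] at ht <;> omega
      rcases hcase with hcase | hcase
      · left
        refine ⟨?_, ?_⟩ <;>
          · have h1 := hkey.1; have h2 := hkey.2; rw [hcase] at h1 h2
            push_cast at h1 h2 ⊢; linarith
      · right
        refine ⟨?_, ?_⟩ <;>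
          · have h1 := hkey.1; have h2 := hkey.2; rw [hcase] at h1 h2
            push_cast at h1 h2 ⊢; linarith
    calc volume (T k) ≤ volume (Ico (φ + n₁*s) (φ + (n₁+1)*s) ∪
        Ico (φ + (n₁+(N:ℤ))*s) (φ + ((n₁+(N:ℤ))+1)*s)) := measure_mono hsub2
      _ ≤ volume (Ico (φ + n₁*s) (φ + (n₁+1)*s)) +
          volume (Ico (φ + (n₁+(N:ℤ))*s) (φ + ((n₁+(N:ℤ))+1)*s)) := measure_union_le _ _
      _ = ENNReal.ofReal s + ENNReal.ofReal s := by
          rw [Real.volume_Ico, Real.volume_Ico]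
          congr 1 <;> · congr 1; push_cast; ring
      _ = ENNReal.ofReal (2*s) := by rw [← ENNReal.ofReal_add hs0.le hs0.le]; congr 1; ring
  calc volume C ≤ volume (⋃ k ∈ Good, T k) := measure_mono hcov
    _ ≤ ∑ k ∈ Good, volume (T k) := measure_biUnion_finset_le _ _
    _ ≤ ∑ _k ∈ Good, ENNReal.ofReal (2*s) := Finset.sum_le_sum hTk
    _ = ENNReal.ofReal (2*s) * Good.card := by
        rw [Finset.sum_const, nsmul_eq_mul, mul_comm]

lemma diffOn_finset_prod {ι : Type*} (u : Finset ι) (F : ι → ℂ → ℂ) (s : Set ℂ)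
    (h : ∀ i ∈ u, DifferentiableOn ℂ (F i) s) :
    DifferentiableOn ℂ (fun z => ∏ i ∈ u, F i z) s := by
  classical
  induction u using Finset.induction_on with
  | empty => simpa using differentiableOn_const (1:ℂ)
  | @insert a u ha ih =>
      simp only [Finset.prod_insert ha]
      exact (h a (Finset.mem_insert_self a u)).mul
        (ih (fun i hi => h i (Finset.mem_insert_of_mem hi)))

lemma contOn_finset_prod {ι : Type*} (u : Finset ι) (F : ι → ℂ → ℂ) (s : Set ℂ)
    (h : ∀ i ∈ u, ContinuousOn (F i) s) :
    ContinuousOn (fun z => ∏ i ∈ u, F i z) s := by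
  classical
  induction u using Finset.induction_on with
  | empty => simpa using continuousOn_const
  | @insert a u ha ih =>
      simp only [Finset.prod_insert ha]
      exact (h a (Finset.mem_insert_self a u)).mul
        (ih (fun i hi => h i (Finset.mem_insert_of_mem hi)))

lemma L1 (K : Set ℂ) (hKT : K ⊆ sphere (0:ℂ) 1)
    (hpos : 0 < volume {θ : ℝ | Complex.exp (θ * Complex.I) ∈ K})
    (h : ℂ → ℂ) (hc : ContinuousOn h (closedBall 0 1))
    (hd : DifferentiableOn ℂ h (ball 0 1))
    (hzero : ∀ z ∈ K, h z = 0) : h 0 = 0 := by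
  classical
  have hπ : (0:ℝ) < Real.pi := Real.pi_pos
  set S : Set ℝ := {θ : ℝ | Complex.exp (θ * Complex.I) ∈ K} with hS
  have hSper : ∀ x ∈ S, ∀ j : ℤ, x + 2*Real.pi*j ∈ S := by
    intro x hx j
    simp only [hS, mem_setOf_eq] at hx ⊢
    rwa [exp_shift]
  have hδ : 0 < volume (S ∩ Ioo 0 (2*Real.pi)) := pos_in_period S hSper hpos
  set δ : ENNReal := volume (S ∩ Ioo 0 (2*Real.pi)) with hδdef
  have hδtop : δ ≠ ⊤ := by
    refine ne_top_of_le_ne_top ?_ (measure_mono inter_subset_right)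
    simp [Real.volume_Ioo, ENNReal.mul_eq_top]
  set δr : ℝ := δ.toReal with hδr
  have hδr0 : 0 < δr := ENNReal.toReal_pos hδ.ne' hδtop
  set β : ℝ := δr / (8*Real.pi) with hβdef
  have hβ : 0 < β := by positivity
  obtain ⟨M₀, hM₀⟩ := (isCompact_closedBall (0:ℂ) 1).exists_bound_of_continuousOn hc
  set M : ℝ := max M₀ 1 with hMdef
  have hM1 : 1 ≤ M := le_max_right _ _
  have hM : ∀ z ∈ closedBall (0:ℂ) 1, ‖h z‖ ≤ M := fun z hz' => (hM₀ z hz').trans (le_max_left _ _)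
  have main : ∀ ε : ℝ, 0 < ε → ε < 1 → ‖h 0‖ ≤ ε ^ β * M := by
    intro ε hε0 hε1
    set O : Set ℝ := {θ : ℝ | ‖h (Complex.exp (θ * Complex.I))‖ < ε} with hO
    have hFc : Continuous fun θ : ℝ => h (Complex.exp (θ * Complex.I)) := by
      refine hc.comp_continuous (by fun_prop) (fun θ => ?_)
      simp only [mem_closedBall, Complex.dist_eq, sub_zero]
      rw [Complex.norm_exp_ofReal_mul_I]
    have hOopen : IsOpen O := isOpen_lt hFc.norm continuous_const
    have hOper : ∀ x ∈ O, ∀ j : ℤ, x + 2*Real.pi*j ∈ O := by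
      intro x hx j
      simp only [hO, mem_setOf_eq] at hx ⊢
      rwa [exp_shift]
    have hSO : S ⊆ O := by
      intro θ hθ
      simp only [hO, mem_setOf_eq]
      rw [hzero _ hθ]
      simpa using hε0
    have hmeas : MeasurableSet (O ∩ Ioo 0 (2*Real.pi)) := (hOopen.inter isOpen_Ioo).measurableSet
    have hfin : volume (O ∩ Ioo 0 (2*Real.pi)) ≠ ⊤ := by
      refine ne_top_of_le_ne_top ?_ (measure_mono inter_subset_right)
      simp [Real.volume_Ioo, ENNReal.mul_eq_top]
    obtain ⟨C, hCsub, hCcomp, hCvol⟩ :=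
      hmeas.exists_isCompact_lt_add hfin (ε := δ/2) (by simp [hδ.ne'])
    have hCge : δ/2 ≤ volume C := by
      have h1 : δ ≤ volume (O ∩ Ioo 0 (2*Real.pi)) :=
        measure_mono (inter_subset_inter hSO (le_refl _))
      have h2 : δ ≤ volume C + δ/2 := h1.trans hCvol.le
      calc δ/2 = δ - δ/2 := (ENNReal.sub_half hδtop).symm
        _ ≤ volume C := tsub_le_iff_right.mpr h2
    obtain ⟨ρ, hρ0, hρ⟩ := hCcomp.exists_thickening_subset_open hOopen
      (hCsub.trans inter_subset_left)
    have hthick : ∀ x ∈ C, ∀ y : ℝ, |y - x| < ρ → y ∈ O := by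
      intro x hx y hy
      refine hρ (Metric.mem_thickening_iff.mpr ⟨x, hx, ?_⟩)
      rwa [Real.dist_eq]
    obtain ⟨N, hNgt⟩ := exists_nat_gt (2*Real.pi/ρ)
    have hN0 : 0 < N := by
      by_contra hcon
      push_neg at hcon
      interval_cases N
      · simp at hNgt; nlinarith [div_pos (by positivity : (0:ℝ) < 2*Real.pi) hρ0]
    have hNR : (0:ℝ) < N := Nat.cast_pos.mpr hN0
    have hsρ : 2*Real.pi/N < ρ := by
      rw [div_lt_iff₀ hNR]
      rw [div_lt_iff₀ hρ0] at hNgt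
      linarith
    set s : ℝ := 2*Real.pi/N with hsdef
    have hs0 : 0 < s := by positivity
    -- card bound from counting, for any φ
    have hcard : ∀ φ : ℝ, ∃ G : Finset ℕ, G ⊆ Finset.range N ∧
        (∀ k ∈ G, φ + (k:ℝ)*s ∈ O) ∧ β * N ≤ G.card := by
      intro φ
      obtain ⟨G, hG1, hG2, hG3⟩ := counting O hOper C (hCsub.trans inter_subset_right) ρ
        hthick N hN0 hsρ φ
      refine ⟨G, hG1, hG2, ?_⟩
      have h1 : δ/2 ≤ ENNReal.ofReal (2*(2*Real.pi/N)*G.card) := by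
        refine hCge.trans (hG3.trans (le_of_eq ?_))
        rw [show ((G.card : ENNReal)) = ENNReal.ofReal (G.card) from
          (ENNReal.ofReal_natCast _).symm, ← ENNReal.ofReal_mul (by positivity)]
      have h2 : δr/2 ≤ 2*(2*Real.pi/N)*G.card := by
        have := ENNReal.toReal_le_of_le_ofReal (by positivity) h1
        rwa [ENNReal.toReal_div, show ((2:ENNReal)).toReal = (2:ℝ) by simp] at this
      have h4 : δr/2 * N ≤ 4*Real.pi*G.card := by
        have h5 := mul_le_mul_of_nonneg_right h2 hNR.le
        calc δr/2*N ≤ (2*(2*Real.pi/↑N)*↑G.card)*↑N := h5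
          _ = 4*Real.pi*G.card * ((↑N)⁻¹*↑N) := by ring
          _ = 4*Real.pi*G.card := by rw [inv_mul_cancel₀ hNR.ne', mul_one]
      show δr/(8*Real.pi) * N ≤ G.card
      rw [div_mul_eq_mul_div, div_le_iff₀ (by positivity)]
      linarith
    -- the product function
    set c : ℕ → ℂ := fun k => Complex.exp (((k:ℝ)*s : ℝ) * Complex.I) with hcdef
    have hcnorm : ∀ k, ‖c k‖ = 1 := fun k => Complex.norm_exp_ofReal_mul_I _
    set G : ℂ → ℂ := fun z => ∏ k ∈ Finset.range N, h (c k * z) with hGdef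
    have hmaps : ∀ k : ℕ, ∀ r : ℝ, ∀ z : ℂ, ‖z‖ ≤ r → ‖c k * z‖ ≤ r := by
      intro k r z hz
      rw [norm_mul, hcnorm, one_mul]; exact hz
    have hGdiff : DifferentiableOn ℂ G (ball 0 1) := by
      refine diffOn_finset_prod _ _ _ (fun k _ => ?_)
      refine hd.comp ((differentiable_id.const_mul (c k)).differentiableOn) ?_
      intro z hz
      simp only [mem_ball, Complex.dist_eq, sub_zero] at hz ⊢
      calc ‖c k * z‖ = ‖z‖ := by rw [norm_mul, hcnorm, one_mul]
        _ < 1 := hz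
    have hGcont : ContinuousOn G (closedBall 0 1) := by
      refine contOn_finset_prod _ _ _ (fun k _ => ?_)
      refine hc.comp (continuous_const.mul continuous_id).continuousOn ?_
      intro z hz
      simp only [mem_closedBall, Complex.dist_eq, sub_zero] at hz ⊢
      calc ‖c k * z‖ = ‖z‖ := by rw [norm_mul, hcnorm, one_mul]
        _ ≤ 1 := hz
    have hGdc : DiffContOnCl ℂ G (ball 0 1) :=
      ⟨hGdiff, by rwa [closure_ball (0:ℂ) one_ne_zero]⟩
    -- boundary bound
    have hbound : ∀ ζ ∈ sphere (0:ℂ) 1, ‖G ζ‖ ≤ ε ^ (β*(N:ℝ)) * M^N := by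
      intro ζ hζ
      have habs : ‖ζ‖ = 1 := by
        simpa [Complex.dist_eq] using mem_sphere_iff_norm.mp hζ
      set φ : ℝ := ζ.arg with hφ
      have hζexp : Complex.exp (φ * Complex.I) = ζ := by
        have := Complex.norm_mul_exp_arg_mul_I ζ
        rwa [habs, Complex.ofReal_one, one_mul] at this
      obtain ⟨Gd, hGd1, hGd2, hGd3⟩ := hcard φ
      have hfact : ∀ k : ℕ, c k * ζ = Complex.exp ((↑(φ + (k:ℝ)*s)) * Complex.I) := by
        intro k
        rw [← hζexp, hcdef, ← Complex.exp_add]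
        congr 1
        push_cast
        ring
      have hsmall : ∀ k ∈ Gd, ‖h (c k * ζ)‖ ≤ ε := by
        intro k hk
        have := hGd2 k hk
        simp only [hO, mem_setOf_eq] at this
        rw [hfact k]
        exact this.le
      have hball : ∀ k : ℕ, c k * ζ ∈ closedBall (0:ℂ) 1 := by
        intro k
        simp only [mem_closedBall, Complex.dist_eq, sub_zero]
        rw [norm_mul, hcnorm, one_mul, habs]
      have hnormG : ‖G ζ‖ = ∏ k ∈ Finset.range N, ‖h (c k * ζ)‖ := by
        rw [hGdef]; exact norm_prod _ _
      have hprod : ∏ k ∈ Finset.range N, ‖h (c k * ζ)‖ =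
          (∏ k ∈ Gd, ‖h (c k * ζ)‖) * ∏ k ∈ (Finset.range N) \ Gd, ‖h (c k * ζ)‖ := by
        rw [← Finset.prod_sdiff hGd1, mul_comm]
      have h1 : ∏ k ∈ Gd, ‖h (c k * ζ)‖ ≤ ε ^ (Gd.card) := by
        rw [← Finset.prod_const]
        exact Finset.prod_le_prod (fun k _ => norm_nonneg _) (fun k hk => hsmall k hk)
      have h2 : ∏ k ∈ (Finset.range N) \ Gd, ‖h (c k * ζ)‖ ≤ M ^ ((Finset.range N) \ Gd).card := by
        rw [← Finset.prod_const]
        exact Finset.prod_le_prod (fun k _ => norm_nonneg _) (fun k _ => hM _ (hball k))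
      have h3 : (ε:ℝ) ^ (Gd.card) ≤ ε ^ (β*(N:ℝ)) := by
        rw [← Real.rpow_natCast ε Gd.card]
        exact Real.rpow_le_rpow_of_exponent_ge hε0 hε1.le hGd3
      have h4 : M ^ ((Finset.range N) \ Gd).card ≤ M ^ N := by
        apply pow_le_pow_right₀ hM1
        calc ((Finset.range N) \ Gd).card ≤ (Finset.range N).card := Finset.card_le_card
              (Finset.sdiff_subset)
          _ = N := Finset.card_range N
      calc ‖G ζ‖ = (∏ k ∈ Gd, ‖h (c k * ζ)‖) * ∏ k ∈ (Finset.range N) \ Gd, ‖h (c k * ζ)‖ := by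
            rw [hnormG, hprod]
        _ ≤ ε ^ (Gd.card) * M ^ ((Finset.range N) \ Gd).card := by
            apply mul_le_mul h1 h2 (Finset.prod_nonneg (fun k _ => norm_nonneg _)) (by positivity)
        _ ≤ ε ^ (β*(N:ℝ)) * M ^ N := by
            apply mul_le_mul h3 h4 (by positivity) (by positivity)
    -- maximum modulus
    have hfront : ∀ z ∈ frontier (ball (0:ℂ) 1), ‖G z‖ ≤ ε ^ (β*(N:ℝ)) * M^N := by
      rw [frontier_ball (0:ℂ) one_ne_zero]
      exact hbound
    have hmax : ‖G 0‖ ≤ ε ^ (β*(N:ℝ)) * M^N := by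
      refine Complex.norm_le_of_forall_mem_frontier_norm_le isBounded_ball hGdc hfront ?_
      rw [closure_ball (0:ℂ) one_ne_zero]
      exact mem_closedBall_self zero_le_one
    have hG0 : G 0 = (h 0)^N := by
      rw [hGdef]
      simp only [mul_zero]
      rw [Finset.prod_const, Finset.card_range]
    have hfin2 : ‖h 0‖^N ≤ (ε ^ β * M)^N := by
      rw [← norm_pow, ← hG0]
      refine hmax.trans (le_of_eq ?_)
      rw [mul_pow]
      congr 1
      rw [← Real.rpow_natCast (ε ^ β) N, ← Real.rpow_mul hε0.le]
    exact (pow_le_pow_iff_left₀ (norm_nonneg (h 0)) (by positivity : (0:ℝ) ≤ ε ^ β * M)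
      hN0.ne').mp hfin2
  -- take ε → 0
  have htend : Filter.Tendsto (fun ε : ℝ => ε ^ β * M) (nhdsWithin 0 (Ioi 0)) (nhds 0) := by
    have h1 : Filter.Tendsto (fun ε : ℝ => ε ^ β) (nhds 0) (nhds ((0:ℝ) ^ β)) :=
      (Real.continuousAt_rpow_const 0 β (Or.inr hβ.le)).tendsto
    rw [Real.zero_rpow hβ.ne'] at h1
    have h2 : Filter.Tendsto (fun ε : ℝ => ε ^ β) (nhdsWithin 0 (Ioi 0)) (nhds 0) :=
      h1.mono_left nhdsWithin_le_nhds
    simpa using h2.mul_const M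
  have hev : ∀ᶠ ε in nhdsWithin (0:ℝ) (Ioi 0), ‖h 0‖ ≤ ε ^ β * M := by
    filter_upwards [Ioo_mem_nhdsGT_of_mem (by constructor <;> norm_num : (0:ℝ) ∈ Ico 0 1)]
      with ε hε
    exact main ε hε.1 hε.2
  have : ‖h 0‖ ≤ 0 := ge_of_tendsto htend hev
  simpa using le_antisymm this (norm_nonneg _)

lemma dslope_step (K : Set ℂ) (hKT : K ⊆ sphere (0:ℂ) 1)
    (q : ℂ → ℂ) (hc : ContinuousOn q (closedBall 0 1))
    (hd : DifferentiableOn ℂ q (ball 0 1))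
    (hzero : ∀ z ∈ K, q z = 0) (hq0 : q 0 = 0) :
    ContinuousOn (dslope q 0) (closedBall 0 1) ∧
    DifferentiableOn ℂ (dslope q 0) (ball 0 1) ∧
    (∀ z ∈ K, dslope q 0 z = 0) := by
  refine ⟨?_, ?_, ?_⟩
  · intro z hz
    by_cases hz0 : z = 0
    · subst hz0
      exact (continuousAt_dslope_same.mpr
        (hd.differentiableAt (ball_mem_nhds (0:ℂ) one_pos))).continuousWithinAt
    · have hsl : ContinuousWithinAt (slope q 0) (closedBall 0 1) z := by
        have : ContinuousWithinAt (fun w => (q w - q 0) / (w - 0)) (closedBall 0 1) z := by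
          apply ContinuousWithinAt.div
          · exact (hc z hz).sub continuousWithinAt_const
          · exact (continuousWithinAt_id).sub continuousWithinAt_const
          · simpa using hz0
        refine this.congr (fun w _ => ?_) ?_
        · rw [slope_def_field]
        · rw [slope_def_field]
      refine hsl.congr_of_eventuallyEq ?_ (dslope_of_ne q hz0)
      exact ((dslope_eventuallyEq_slope_of_ne q hz0).filter_mono nhdsWithin_le_nhds)
  · exact (differentiableOn_dslope (ball_mem_nhds (0:ℂ) one_pos)).mpr hd
  · intro z hzK
    have hz0 : z ≠ 0 := by
      intro h0
      have := hKT hzK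
      rw [h0] at this
      simp at this
    rw [dslope_of_ne q hz0, slope_def_field, hzero z hzK, hq0]
    simp

/-- A compact subset of the unit circle with positive arc-length measure is a
set of uniqueness for the disc algebra. -/
theorem stmt0 (K : Set ℂ) (hKc : IsCompact K) (hKT : K ⊆ sphere (0 : ℂ) 1)
    (hpos : 0 < MeasureTheory.volume {θ : ℝ | Complex.exp (θ * Complex.I) ∈ K})
    (f g : ℂ → ℂ)
    (hf : ContinuousOn f (closedBall (0 : ℂ) 1))
    (hf' : DifferentiableOn ℂ f (ball (0 : ℂ) 1))
    (hg : ContinuousOn g (closedBall (0 : ℂ) 1))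
    (hg' : DifferentiableOn ℂ g (ball (0 : ℂ) 1))
    (hfg : EqOn f g K) :
    EqOn f g (closedBall (0 : ℂ) 1) := by
  intro z hzB
  set h : ℂ → ℂ := fun w => f w - g w with hh
  have hc : ContinuousOn h (closedBall 0 1) := hf.sub hg
  have hd : DifferentiableOn ℂ h (ball 0 1) := hf'.sub hg'
  have hzero : ∀ w ∈ K, h w = 0 := fun w hw => sub_eq_zero.mpr (hfg hw)
  have hiter : ∀ n : ℕ, ContinuousOn ((Function.swap dslope 0)^[n] h) (closedBall 0 1) ∧
      DifferentiableOn ℂ ((Function.swap dslope 0)^[n] h) (ball 0 1) ∧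
      (∀ w ∈ K, ((Function.swap dslope 0)^[n] h) w = 0) := by
    intro n
    induction n with
    | zero => exact ⟨hc, hd, hzero⟩
    | succ n ih =>
        have h0 : ((Function.swap dslope 0)^[n] h) 0 = 0 :=
          L1 K hKT hpos _ ih.1 ih.2.1 ih.2.2
        rw [Function.iterate_succ_apply']
        exact dslope_step K hKT _ ih.1 ih.2.1 ih.2.2 h0
  have hvanish : ∀ n : ℕ, ((Function.swap dslope 0)^[n] h) 0 = 0 := fun n =>
    L1 K hKT hpos _ (hiter n).1 (hiter n).2.1 (hiter n).2.2
  have han : AnalyticOnNhd ℂ h (ball 0 1) := hd.analyticOnNhd isOpen_ball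
  have h0an : AnalyticAt ℂ h 0 := han 0 (mem_ball_self one_pos)
  obtain ⟨p, hp⟩ := h0an
  have hev : ∀ᶠ w in nhds (0:ℂ), h w = 0 := by
    by_contra hcon
    have hpne : p ≠ 0 := fun h' => hcon (hp.locally_zero_iff.mpr h')
    exact hp.iterate_dslope_fslope_ne_zero hpne (hvanish p.order)
  have hev' : h =ᶠ[nhds (0:ℂ)] 0 := hev
  have hball : EqOn h 0 (ball 0 1) :=
    han.eqOn_zero_of_preconnected_of_eventuallyEq_zero (convex_ball (0:ℂ) 1).isPreconnected
      (mem_ball_self one_pos) hev'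
  have hzero_cb : h z = 0 := by
    have hwc : z ∈ closure (ball (0:ℂ) 1) := by rwa [closure_ball (0:ℂ) one_ne_zero]
    have hne : (nhdsWithin z (ball (0:ℂ) 1)).NeBot := mem_closure_iff_nhdsWithin_neBot.mp hwc
    have ht1 : Filter.Tendsto h (nhdsWithin z (ball 0 1)) (nhds (h z)) :=
      (hc z hzB).mono ball_subset_closedBall
    have ht2 : Filter.Tendsto h (nhdsWithin z (ball 0 1)) (nhds 0) := by
      apply Filter.Tendsto.congr' _ tendsto_const_nhds
      filter_upwards [self_mem_nhdsWithin] with x hx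
      exact (hball hx).symm
    exact tendsto_nhds_unique ht1 ht2
  exact sub_eq_zero.mp hzero_cb
end

section
/- The function f(z) = 1/(1−z), defined on the closed unit disc with f(1) = ∞, is a uniform limit of polynomials on D̄ with respect to the chordal metric χ, but is not a uniform limit of polynomials on D̄ with respect to the Euclidean metric on ℂ. -/
open Complex Metric Set Filter

/-- The chordal metric on the Riemann sphere `ℂ ∪ {∞}`, modeled as `OnePoint ℂ`
(`∞ = OnePoint.infty`). -/
noncomputable def chi : OnePoint ℂ → OnePoint ℂ → ℝ := fun a b =>
  match a, b with
  | (some a : Option ℂ), (some b : Option ℂ) =>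
      ‖a - b‖ / (Real.sqrt (1 + ‖a‖ ^ 2) * Real.sqrt (1 + ‖b‖ ^ 2))
  | (some a : Option ℂ), (none : Option ℂ) => 1 / Real.sqrt (1 + ‖a‖ ^ 2)
  | (none : Option ℂ), (some b : Option ℂ) => 1 / Real.sqrt (1 + ‖b‖ ^ 2)
  | (none : Option ℂ), (none : Option ℂ) => 0

/-- The function `f(z) = 1/(1-z)` on the closed unit disc, with `f(1) = ∞`. -/
noncomputable def fext : ℂ → OnePoint ℂ := fun z =>
  if z = 1 then OnePoint.infty else ((1 - z)⁻¹ : ℂ)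

private lemma key (z : ℂ) (hz : ‖z‖ ≤ 1) (r : ℝ) (hr0 : 0 ≤ r) (hr1 : r < 1)
    (k : ℕ) (hk : r ^ k ≤ 1/2) :
    chi (((1 - ((r:ℂ)*z)^k) / (1 - (r:ℂ)*z) : ℂ)) (fext z) ≤ 2 * (r^k + (1 - r)) := by
  have hη0 : (0:ℝ) ≤ r ^ k := pow_nonneg hr0 k
  have habsz : (0:ℝ) ≤ ‖z‖ := norm_nonneg z
  have habsrz : ‖(r:ℂ)*z‖ ≤ r := by
    rw [norm_mul, Complex.norm_real, Real.norm_eq_abs, _root_.abs_of_nonneg hr0]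
    nlinarith
  have hne : (1:ℂ) - (r:ℂ)*z ≠ 0 := by
    intro h
    have h1 : (r:ℂ)*z = 1 := by linear_combination -h
    rw [h1] at habsrz; simp at habsrz; linarith
  set g : ℂ := ((1:ℂ) - (r:ℂ)*z)⁻¹ with hgdef
  have hg0 : 0 < ‖g‖ := norm_pos_iff.mpr (inv_ne_zero hne)
  set w : ℂ := ((r:ℂ)*z)^k with hwdef
  have hw : ‖w‖ ≤ r ^ k := by
    rw [hwdef, norm_pow]; exact pow_le_pow_left₀ (norm_nonneg _) habsrz k
  have hP : (1 - ((r:ℂ)*z)^k) / (1 - (r:ℂ)*z) = (1 - w) * g := by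
    rw [div_eq_mul_inv]
  set P : ℂ := (1 - w) * g with hPdef
  have hA_lb : (1 - r^k) * ‖g‖ ≤ ‖P‖ := by
    rw [hPdef, norm_mul]
    have h1 : (1:ℝ) - r^k ≤ ‖1 - w‖ := by
      have := norm_sub_norm_le (1:ℂ) w
      simp only [norm_one] at this
      linarith
    exact mul_le_mul_of_nonneg_right h1 hg0.le
  set A := ‖P‖ with hAdef
  have hA0 : 0 ≤ A := norm_nonneg P
  set SA := Real.sqrt (1 + A^2) with hSAdef
  have hSA_A : A ≤ SA := by
    rw [hSAdef]
    calc A = Real.sqrt (A^2) := (Real.sqrt_sq hA0).symm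
    _ ≤ Real.sqrt (1 + A^2) := Real.sqrt_le_sqrt (by linarith)
  have hSA_1 : (1:ℝ) ≤ SA := by
    rw [hSAdef]
    calc (1:ℝ) = Real.sqrt 1 := (Real.sqrt_one).symm
    _ ≤ Real.sqrt (1 + A^2) := Real.sqrt_le_sqrt (by nlinarith)
  rw [hP]
  by_cases hz1 : z = 1
  · -- z = 1 : fext z = ∞
    have hfe : fext z = OnePoint.infty := by simp [fext, hz1]
    rw [hfe]
    have hchi : chi (P : OnePoint ℂ) OnePoint.infty = 1 / SA := rfl
    rw [hchi]
    have hgval : ‖g‖ = (1 - r)⁻¹ := by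
      rw [hgdef, norm_inv, hz1, mul_one]
      have : (1:ℂ) - (r:ℂ) = ((1 - r : ℝ) : ℂ) := by push_cast; ring
      rw [this, Complex.norm_real, Real.norm_eq_abs, abs_of_pos (by linarith)]
    have hSA_lb : (1/2) * (1 - r)⁻¹ ≤ SA := by
      calc (1/2) * (1-r)⁻¹ ≤ (1 - r^k) * ‖g‖ := by
            rw [hgval]
            apply mul_le_mul_of_nonneg_right (by linarith) (inv_nonneg.mpr (by linarith))
      _ ≤ A := hA_lb
      _ ≤ SA := hSA_A
    have h2 : (0:ℝ) < (1/2) * (1-r)⁻¹ := mul_pos (by norm_num) (inv_pos.mpr (by linarith))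
    calc 1 / SA ≤ 1 / ((1/2) * (1-r)⁻¹) := one_div_le_one_div_of_le h2 hSA_lb
    _ = 2 * (1 - r) := by field_simp
    _ ≤ 2 * (r^k + (1 - r)) := by nlinarith
  · -- z ≠ 1
    have hbz : (1:ℂ) - z ≠ 0 := sub_ne_zero.mpr (fun h => hz1 h.symm)
    set b : ℂ := ((1:ℂ) - z)⁻¹ with hbdef
    have hfe : fext z = (b : OnePoint ℂ) := by simp [fext, hz1, hbdef]
    rw [hfe]
    set B := ‖b‖ with hBdef
    have hB0 : 0 < B := norm_pos_iff.mpr (inv_ne_zero hbz)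
    set SB := Real.sqrt (1 + B^2) with hSBdef
    have hSB_B : B ≤ SB := by
      rw [hSBdef]
      calc B = Real.sqrt (B^2) := (Real.sqrt_sq hB0.le).symm
      _ ≤ Real.sqrt (1 + B^2) := Real.sqrt_le_sqrt (by linarith)
    have hSB_1 : (1:ℝ) ≤ SB := by
      rw [hSBdef]
      calc (1:ℝ) = Real.sqrt 1 := (Real.sqrt_one).symm
      _ ≤ Real.sqrt (1 + B^2) := Real.sqrt_le_sqrt (by nlinarith)
    set M := max 1 B with hMdef
    have hM1 : (1:ℝ) ≤ M := le_max_left _ _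
    have hMB : B ≤ M := le_max_right _ _
    have hSB_M : M ≤ SB := max_le hSB_1 hSB_B
    have hchi : chi (P : OnePoint ℂ) (b : OnePoint ℂ) = ‖P - b‖ / (SA * SB) := rfl
    rw [hchi]
    -- numerator bound
    have hgb : g - b = -((1:ℂ) - (r:ℂ)) * z * g * b := by
      rw [hgdef, hbdef]
      field_simp
      ring
    have hgbabs : ‖g - b‖ ≤ (1 - r) * (‖g‖ * M) := by
      rw [hgb]
      have : ‖-((1:ℂ) - (r:ℂ)) * z * g * b‖
          = (1 - r) * (‖z‖ * (‖g‖ * B)) := by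
        simp only [norm_mul, norm_neg]
        have : ‖1 - (r:ℂ)‖ = 1 - r := by
          have h1 : (1:ℂ) - (r:ℂ) = ((1 - r : ℝ) : ℂ) := by push_cast; ring
          rw [h1, Complex.norm_real, Real.norm_eq_abs, abs_of_pos (by linarith)]
        rw [this]; ring
      rw [this]
      have h2 : ‖z‖ * (‖g‖ * B) ≤ ‖g‖ * M := by
        calc ‖z‖ * (‖g‖ * B) ≤ 1 * (‖g‖ * B) := by
              apply mul_le_mul_of_nonneg_right hz (by positivity)
        _ = ‖g‖ * B := one_mul _
        _ ≤ ‖g‖ * M := mul_le_mul_of_nonneg_left hMB hg0.le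
      exact mul_le_mul_of_nonneg_left h2 (by linarith)
    have hnum : ‖P - b‖ ≤ (r^k + (1 - r)) * (‖g‖ * M) := by
      have hPb : P - b = (g - b) + (-(w * g)) := by rw [hPdef]; ring
      calc ‖P - b‖ ≤ ‖g - b‖ + ‖-(w*g)‖ := by
            rw [hPb]; exact norm_add_le _ _
      _ = ‖g - b‖ + ‖w‖ * ‖g‖ := by rw [norm_neg, norm_mul]
      _ ≤ (1 - r) * (‖g‖ * M) + r^k * (‖g‖ * M) := by
            have h3 : ‖w‖ * ‖g‖ ≤ r^k * (‖g‖ * M) := by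
              calc ‖w‖ * ‖g‖ ≤ r^k * ‖g‖ :=
                    mul_le_mul_of_nonneg_right hw hg0.le
              _ ≤ r^k * (‖g‖ * M) := mul_le_mul_of_nonneg_left (le_mul_of_one_le_right hg0.le hM1) hη0
            linarith [hgbabs]
      _ = (r^k + (1 - r)) * (‖g‖ * M) := by ring
    -- denominator bound
    have hgM0 : (0:ℝ) < ‖g‖ * M := by positivity
    have hden : (1 - r^k) * (‖g‖ * M) ≤ SA * SB := by
      calc (1 - r^k) * (‖g‖ * M) = ((1 - r^k) * ‖g‖) * M := by ring
      _ ≤ SA * SB := by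
          apply mul_le_mul (le_trans hA_lb hSA_A) hSB_M (by positivity)
          linarith
    have hdenpos : (0:ℝ) < (1 - r^k) * (‖g‖ * M) := by
      apply mul_pos (by linarith) hgM0
    calc ‖P - b‖ / (SA * SB)
        ≤ ((r^k + (1 - r)) * (‖g‖ * M)) / ((1 - r^k) * (‖g‖ * M)) :=
          div_le_div₀ (mul_nonneg (by linarith) hgM0.le) hnum hdenpos hden
    _ = (r^k + (1 - r)) / (1 - r^k) := by
        rw [mul_div_mul_right _ _ (ne_of_gt hgM0)]
    _ ≤ 2 * (r^k + (1 - r)) := by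
        rw [div_le_iff₀ (by linarith)]
        nlinarith

private noncomputable def rr (n : ℕ) : ℝ := (n:ℝ)/(n+1)

private lemma rr_nonneg (n : ℕ) : 0 ≤ rr n := by unfold rr; positivity

private lemma rr_lt_one (n : ℕ) : rr n < 1 := by
  unfold rr
  rw [div_lt_one (by positivity)]
  linarith

private lemma one_sub_rr (n : ℕ) : 1 - rr n = 1/(n+1) := by
  unfold rr
  field_simp
  ring

private noncomputable def mm (n : ℕ) : ℕ :=
  (exists_pow_lt_of_lt_one (show (0:ℝ) < 1/(n+1) by positivity) (rr_lt_one n)).choose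

private lemma mm_spec (n : ℕ) : (rr n) ^ (mm n) < 1/(n+1) :=
  (exists_pow_lt_of_lt_one (show (0:ℝ) < 1/(n+1) by positivity) (rr_lt_one n)).choose_spec

/-- `1/(1−z)` (with value `∞` at `z = 1`) is a uniform limit of polynomials on
the closed unit disc for the chordal metric, but not for the Euclidean metric. -/
theorem stmt6 :
    (∃ p : ℕ → Polynomial ℂ, ∀ ε > (0 : ℝ), ∃ N : ℕ, ∀ n ≥ N,
        ∀ z ∈ closedBall (0 : ℂ) 1, chi ((p n).eval z : ℂ) (fext z) < ε) ∧
    ¬ (∃ p : ℕ → Polynomial ℂ, ∀ ε > (0 : ℝ), ∃ N : ℕ, ∀ n ≥ N,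
        ∀ z ∈ closedBall (0 : ℂ) 1 \ {1}, ‖(p n).eval z - (1 - z)⁻¹‖ < ε) := by
  constructor
  · -- chordal approximation
    refine ⟨fun n => ∑ i ∈ Finset.range (mm n), (Polynomial.C ((rr n : ℝ) : ℂ) * Polynomial.X)^i,
      fun ε hε => ?_⟩
    obtain ⟨N₀, hN₀⟩ := exists_nat_gt (4/ε)
    refine ⟨max N₀ 1, fun n hn z hzball => ?_⟩
    have hnN₀ : N₀ ≤ n := le_trans (le_max_left _ _) hn
    have hn1 : 1 ≤ n := le_trans (le_max_right _ _) hn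
    have hz : ‖z‖ ≤ 1 := by
      rw [mem_closedBall_zero_iff] at hzball
      exact hzball
    set r := rr n with hrdef
    have hr0 := rr_nonneg n
    have hr1 := rr_lt_one n
    have hmm := mm_spec n
    have hn1' : (1:ℝ)/(n+1) ≤ 1/2 := by
      apply div_le_div_of_nonneg_left (by norm_num) (by norm_num)
      have : (1:ℝ) ≤ n := by exact_mod_cast hn1
      linarith
    -- evaluate the polynomial
    have hrz1 : ((r:ℂ)*z) ≠ 1 := by
      intro h
      have : ‖(r:ℂ)*z‖ ≤ r := by
        rw [norm_mul, Complex.norm_real, Real.norm_eq_abs, _root_.abs_of_nonneg hr0]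
        nlinarith [norm_nonneg z]
      rw [h] at this; simp at this; linarith
    have heval : (∑ i ∈ Finset.range (mm n), (Polynomial.C ((r : ℝ) : ℂ) * Polynomial.X)^i).eval z
        = (1 - ((r:ℂ)*z)^(mm n)) / (1 - (r:ℂ)*z) := by
      rw [Polynomial.eval_finset_sum]
      simp only [Polynomial.eval_pow, Polynomial.eval_mul, Polynomial.eval_C, Polynomial.eval_X]
      rw [geom_sum_eq hrz1]
      rw [← neg_sub (1:ℂ) (((r:ℂ)*z)^(mm n)), ← neg_sub (1:ℂ) ((r:ℂ)*z), neg_div_neg_eq]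
    rw [heval]
    have hkey := key z hz r hr0 hr1 (mm n) (by linarith)
    have hbound : 2 * (r^(mm n) + (1 - r)) < ε := by
      have h1 : 1 - r = 1/(n+1) := one_sub_rr n
      have h2 : (4:ℝ)/(n+1) < ε := by
        rw [div_lt_iff₀ (by positivity)]
        have hNn : (N₀:ℝ) ≤ n := by exact_mod_cast hnN₀
        have h3 : 4/ε < (n:ℝ) + 1 := by linarith
        rw [div_lt_iff₀ hε] at h3
        linarith
      have h4 : r^(mm n) < 1/(n+1) := hmm
      rw [h1]
      have h6 : (4:ℝ)/((n:ℝ)+1) = 4*(1/((n:ℝ)+1)) := by ring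
      rw [h6] at h2
      linarith
    linarith
  · -- Euclidean non-approximation
    rintro ⟨p, hp⟩
    obtain ⟨N, hN⟩ := hp 1 one_pos
    have hN' := hN N le_rfl
    obtain ⟨M, hM⟩ := (isCompact_closedBall (0:ℂ) 1).exists_bound_of_continuousOn
      ((p N).continuous_aeval).continuousOn
    set M' := max M 0 with hM'def
    have hM'0 : 0 ≤ M' := le_max_right _ _
    set δ : ℝ := 1/(M'+2) with hδdef
    have hδ0 : 0 < δ := by positivity
    have hδhalf : δ ≤ 1/2 := by
      rw [hδdef]
      apply div_le_div_of_nonneg_left (by norm_num) (by norm_num)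
      linarith
    set z₀ : ℂ := 1 - (δ:ℂ) with hz₀def
    have hz₀ball : z₀ ∈ closedBall (0:ℂ) 1 := by
      rw [mem_closedBall_zero_iff, hz₀def]
      have : (1:ℂ) - (δ:ℂ) = ((1 - δ : ℝ) : ℂ) := by push_cast; ring
      rw [this, Complex.norm_real, Real.norm_eq_abs, _root_.abs_of_nonneg (by linarith)]
      linarith
    have hz₀ne : z₀ ≠ 1 := by
      rw [hz₀def]
      intro h
      have : (δ:ℂ) = 0 := by linear_combination -h
      rw [Complex.ofReal_eq_zero] at this
      linarith
    have hmem : z₀ ∈ closedBall (0:ℂ) 1 \ {1} := ⟨hz₀ball, hz₀ne⟩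
    have h1 := hN' z₀ hmem
    have hb : (1:ℂ) - z₀ = (δ:ℂ) := by rw [hz₀def]; ring
    have hbabs : ‖(1 - z₀)⁻¹‖ = M' + 2 := by
      rw [hb, norm_inv, Complex.norm_real, Real.norm_eq_abs, _root_.abs_of_pos hδ0, hδdef]
      rw [one_div, inv_inv]
    have hMz : ‖(p N).eval z₀‖ ≤ M' := by
      have := hM z₀ hz₀ball
      exact le_trans this (le_max_left _ _)
    have h2 : ‖(1 - z₀)⁻¹‖ - ‖(p N).eval z₀‖
        ≤ ‖(p N).eval z₀ - (1 - z₀)⁻¹‖ := by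
      have := norm_sub_norm_le ((1 - z₀)⁻¹) ((p N).eval z₀)
      calc ‖(1 - z₀)⁻¹‖ - ‖(p N).eval z₀‖
          ≤ ‖(1 - z₀)⁻¹ - (p N).eval z₀‖ := this
      _ = ‖(p N).eval z₀ - (1 - z₀)⁻¹‖ := by rw [norm_sub_rev]
    rw [hbabs] at h2
    linarith
end

section
/- Let I be an uncountable set, (Y,d) a metric space, and f : D̄^I → Y continuous. Then f depends only on countably many coordinates: there is a countable set F ⊆ I such that f(z) = f(w) whenever z_i = w_i for all i ∈ F. -/
open Complex Metric Set Filter Uniformity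

lemma stmt8_key {I : Type*} {Y : Type*} [MetricSpace Y]
    (f : (I → ℂ) → Y)
    (hf : ContinuousOn f {z : I → ℂ | ∀ i, z i ∈ closedBall (0 : ℂ) 1})
    {ε : ℝ} (hε : 0 < ε) :
    ∃ F : Set I, F.Finite ∧
      ∀ z w : I → ℂ, (∀ i, z i ∈ closedBall (0 : ℂ) 1) → (∀ i, w i ∈ closedBall (0 : ℂ) 1) →
        (∀ i ∈ F, z i = w i) → dist (f z) (f w) < ε := by
  set S : Set (I → ℂ) := {z : I → ℂ | ∀ i, z i ∈ closedBall (0 : ℂ) 1} with hSdef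
  have hSeq : S = Set.pi univ (fun _ => closedBall (0 : ℂ) 1) := by
    ext z; simp [hSdef, Set.mem_pi]
  have hS : IsCompact S := by
    rw [hSeq]; exact isCompact_univ_pi fun i => isCompact_closedBall 0 1
  have hu : UniformContinuousOn f S := hS.uniformContinuousOn_of_continuous hf
  have hW : {p : Y × Y | dist p.1 p.2 < ε} ∈ 𝓤 Y := dist_mem_uniformity hε
  have hT := hu hW
  rw [Filter.mem_map, Filter.mem_inf_principal] at hT
  rw [Pi.uniformity, Filter.mem_iInf] at hT
  obtain ⟨Fs, hFs, V, hV, hTeq⟩ := hT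
  refine ⟨Fs, hFs, fun z w hz hw hag => ?_⟩
  have hmem : (z, w) ∈ ⋂ i, V i := by
    refine Set.mem_iInter.2 fun i => ?_
    obtain ⟨W, hWmem, hsub⟩ := Filter.mem_comap.mp (hV i)
    apply hsub
    have : z (i : I) = w (i : I) := hag i i.2
    show (z (i : I), w (i : I)) ∈ W
    rw [← this]
    exact refl_mem_uniformity hWmem
  rw [← hTeq] at hmem
  exact hmem (Set.mk_mem_prod hz hw)

/-- a continuous function on `D̄^I` (product topology) with `I` uncountable
depends only on countably many coordinates. -/
theorem stmt8 {I : Type*} [Uncountable I] {Y : Type*} [MetricSpace Y]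
    (f : (I → ℂ) → Y) (hf : ContinuousOn f {z : I → ℂ | ∀ i, z i ∈ closedBall (0 : ℂ) 1}) :
    ∃ F : Set I, F.Countable ∧
      ∀ z w : I → ℂ, (∀ i, z i ∈ closedBall (0 : ℂ) 1) → (∀ i, w i ∈ closedBall (0 : ℂ) 1) →
        (∀ i ∈ F, z i = w i) → f z = f w := by
  have key : ∀ n : ℕ, ∃ F : Set I, F.Finite ∧
      ∀ z w : I → ℂ, (∀ i, z i ∈ closedBall (0 : ℂ) 1) → (∀ i, w i ∈ closedBall (0 : ℂ) 1) →
        (∀ i ∈ F, z i = w i) → dist (f z) (f w) < 1 / (n + 1) := fun n =>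
    stmt8_key f hf (by positivity)
  choose F hFfin hFd using key
  refine ⟨⋃ n, F n, countable_iUnion fun n => (hFfin n).countable, fun z w hz hw hag => ?_⟩
  have hd : ∀ n : ℕ, dist (f z) (f w) < 1 / (n + 1) := fun n =>
    hFd n z w hz hw fun i hi => hag i (Set.mem_iUnion.2 ⟨n, hi⟩)
  by_contra h
  have hpos : 0 < dist (f z) (f w) := dist_pos.2 fun he => h he
  obtain ⟨n, hn⟩ := exists_nat_one_div_lt hpos
  exact absurd (hd n) (not_lt.2 hn.le)
end

section
/- The function f(z,w) = (2zw − z − w)/(2 − z − w) on D̄² ∖ {(1,1)}, extended by f(1,1) = −1, is separately in the disc algebra in each variable (for each fixed value of the other variable in D̄), but f is not continuous on D̄² at the point (1,1); indeed f(e^{iθ}, e^{−iθ}) = 1 for all real θ while f(1,1) = −1. -/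
open Complex Metric Set

lemma denom_eq_zero {z w : ℂ} (hz : ‖z‖ ≤ 1) (hw : ‖w‖ ≤ 1)
    (h0 : 2 - z - w = 0) : z = 1 ∧ w = 1 := by
  have hre : z.re + w.re = 2 := by
    have := congrArg Complex.re h0; simp at this; linarith
  have him : z.im + w.im = 0 := by
    have := congrArg Complex.im h0; simp at this; linarith
  have hz2 : z.re ^ 2 + z.im ^ 2 ≤ 1 := by
    have h1 : ‖z‖ ≤ 1 := hz
    have h2 := Complex.sq_norm z
    have h3 := Complex.normSq_apply z
    nlinarith [norm_nonneg z]
  have hw2 : w.re ^ 2 + w.im ^ 2 ≤ 1 := by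
    have h1 : ‖w‖ ≤ 1 := hw
    have h2 := Complex.sq_norm w
    have h3 := Complex.normSq_apply w
    nlinarith [norm_nonneg w]
  have hzre : z.re = 1 := by nlinarith
  have hwre : w.re = 1 := by nlinarith
  have hzim : z.im = 0 := by nlinarith
  have hwim : w.im = 0 := by nlinarith
  constructor <;>
    · apply Complex.ext <;> simp [hzre, hzim, hwre, hwim]

lemma denom_ne {z w : ℂ} (hz : ‖z‖ ≤ 1) (hw : ‖w‖ ≤ 1) (h : ¬(z = 1 ∧ w = 1)) :
    2 - z - w ≠ 0 := fun h0 => h (denom_eq_zero hz hw h0)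

/-- Knese's example: `f(z,w) = (2zw − z − w)/(2 − z − w)` on `D̄² ∖ {(1,1)}`,
extended by `f(1,1) = −1`. -/
noncomputable def knese : ℂ × ℂ → ℂ := fun p =>
  if p = (1, 1) then -1 else (2 * p.1 * p.2 - p.1 - p.2) / (2 - p.1 - p.2)

lemma knese_one (z : ℂ) : knese (z, 1) = -1 := by
  unfold knese
  by_cases h : z = 1
  · simp [h]
  · rw [if_neg (by simp [h])]
    have h2 : (2 : ℂ) - z - 1 ≠ 0 := by intro h0; apply h; linear_combination -h0
    rw [div_eq_iff h2]; ring

lemma knese_one' (w : ℂ) : knese (1, w) = -1 := by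
  unfold knese
  by_cases h : w = 1
  · simp [h]
  · rw [if_neg (by simp [h])]
    have h2 : (2 : ℂ) - 1 - w ≠ 0 := by intro h0; apply h; linear_combination -h0
    rw [div_eq_iff h2]; ring

lemma knese_eq {z w : ℂ} (h : ¬(z = 1 ∧ w = 1)) :
    knese (z, w) = (2 * z * w - z - w) / (2 - z - w) := by
  unfold knese
  rw [if_neg]
  intro h0
  exact h ⟨congrArg Prod.fst h0, congrArg Prod.snd h0⟩

/-- the function `knese` is separately in the disc algebra in each variable,
but is not continuous on `D̄²` at the point `(1,1)`; indeed `f(e^{iθ}, e^{−iθ}) = 1` for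
all real `θ`, while `f(1,1) = −1`. -/
theorem stmt11 :
    (∀ w ∈ closedBall (0 : ℂ) 1,
        ContinuousOn (fun z => knese (z, w)) (closedBall (0 : ℂ) 1) ∧
        DifferentiableOn ℂ (fun z => knese (z, w)) (ball (0 : ℂ) 1)) ∧
    (∀ z ∈ closedBall (0 : ℂ) 1,
        ContinuousOn (fun w => knese (z, w)) (closedBall (0 : ℂ) 1) ∧
        DifferentiableOn ℂ (fun w => knese (z, w)) (ball (0 : ℂ) 1)) ∧
    ¬ ContinuousWithinAt knese (closedBall (0 : ℂ) 1 ×ˢ closedBall (0 : ℂ) 1) (1, 1) ∧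
    (∀ θ : ℝ, Complex.exp (θ * Complex.I) ≠ 1 →
        knese (Complex.exp (θ * Complex.I), Complex.exp (-θ * Complex.I)) = 1) ∧
    knese (1, 1) = -1 := by
  have hball : ∀ z : ℂ, z ∈ closedBall (0 : ℂ) 1 → ‖z‖ ≤ 1 := by
    intro z hz; simpa [mem_closedBall, dist_eq_norm] using hz
  have key : ∀ θ : ℝ, Complex.exp (θ * Complex.I) ≠ 1 →
      knese (Complex.exp (θ * Complex.I), Complex.exp (-θ * Complex.I)) = 1 := by
    intro θ hθ
    have hn1 : ‖Complex.exp (θ * Complex.I)‖ = 1 := by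
      rw [Complex.norm_exp]; simp
    have hn2 : ‖Complex.exp (-θ * Complex.I)‖ = 1 := by
      rw [Complex.norm_exp]; simp
    have hprod : Complex.exp (θ * Complex.I) * Complex.exp (-θ * Complex.I) = 1 := by
      rw [← Complex.exp_add]; ring_nf; exact Complex.exp_zero
    rw [knese_eq (by intro h; exact hθ h.1)]
    have hd : (2 : ℂ) - Complex.exp (θ * Complex.I) - Complex.exp (-θ * Complex.I) ≠ 0 :=
      denom_ne hn1.le hn2.le (by intro h; exact hθ h.1)
    rw [div_eq_one_iff_eq hd]
    linear_combination 2 * hprod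
  refine ⟨?_, ?_, ?_, key, by unfold knese; simp⟩
  · intro w hw
    by_cases hw1 : w = 1
    · subst hw1
      have : (fun z => knese (z, 1)) = fun _ => (-1 : ℂ) := funext knese_one
      rw [this]
      exact ⟨continuousOn_const, differentiableOn_const _⟩
    · have heq : (fun z => knese (z, w)) =
          fun z => (2 * z * w - z - w) / (2 - z - w) :=
        funext fun z => knese_eq (by tauto)
      rw [heq]
      have hd : ∀ z ∈ closedBall (0 : ℂ) 1, (2 : ℂ) - z - w ≠ 0 := fun z hz =>
        denom_ne (hball z hz) (hball w hw) (by tauto)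
      constructor
      · exact ContinuousOn.div (by fun_prop) (by fun_prop) hd
      · exact DifferentiableOn.div (by fun_prop) (by fun_prop)
          (fun z hz => hd z (ball_subset_closedBall hz))
  · intro z hz
    by_cases hz1 : z = 1
    · subst hz1
      have : (fun w => knese (1, w)) = fun _ => (-1 : ℂ) := funext knese_one'
      rw [this]
      exact ⟨continuousOn_const, differentiableOn_const _⟩
    · have heq : (fun w => knese (z, w)) =
          fun w => (2 * z * w - z - w) / (2 - z - w) :=
        funext fun w => knese_eq (by tauto)
      rw [heq]
      have hd : ∀ w ∈ closedBall (0 : ℂ) 1, (2 : ℂ) - z - w ≠ 0 := fun w hw =>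
        denom_ne (hball z hz) (hball w hw) (by tauto)
      constructor
      · exact ContinuousOn.div (by fun_prop) (by fun_prop) hd
      · exact DifferentiableOn.div (by fun_prop) (by fun_prop)
          (fun w hw => hd w (ball_subset_closedBall hw))
  · intro hcont
    set S := closedBall (0 : ℂ) 1 ×ˢ closedBall (0 : ℂ) 1
    -- sequence
    set seq : ℕ → ℂ × ℂ := fun n =>
      (Complex.exp ((1 / (n + 1) : ℝ) * Complex.I),
       Complex.exp (-((1 / (n + 1) : ℝ) : ℂ) * Complex.I)) with hseq
    have hθpos : ∀ n : ℕ, (0 : ℝ) < 1 / (n + 1) := fun n => by positivity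
    have hθle : ∀ n : ℕ, (1 / (n + 1) : ℝ) ≤ 1 := fun n => by
      rw [div_le_one (by positivity)]; linarith [Nat.cast_nonneg (α := ℝ) n]
    have hne1 : ∀ n : ℕ, Complex.exp ((1 / (n + 1) : ℝ) * Complex.I) ≠ 1 := by
      intro n h
      rw [Complex.exp_eq_one_iff] at h
      obtain ⟨k, hk⟩ := h
      have hI : (Complex.I : ℂ) ≠ 0 := Complex.I_ne_zero
      have h2 : ((1 / (n + 1) : ℝ) : ℂ) = (k : ℂ) * (2 * (Real.pi : ℂ)) :=
        mul_right_cancel₀ hI (by linear_combination hk)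
      have h3 : (1 / (n + 1) : ℝ) = k * (2 * Real.pi) := by exact_mod_cast h2
      have hπ := Real.pi_gt_three
      rcases lt_trichotomy (k : ℝ) 0 with hk0 | hk0 | hk0
      · nlinarith [hθpos n]
      · rw [hk0] at h3; simp at h3; linarith [hθpos n, h3]
      · have : (1 : ℝ) ≤ k := by exact_mod_cast hk0
        nlinarith [hθle n]
    have hmemS : ∀ n, seq n ∈ S := by
      intro n
      constructor <;>
      · simp only [mem_closedBall, dist_eq_norm, sub_zero,
          Complex.norm_exp]
        simp [hseq, Complex.norm_exp]
    have htend : Filter.Tendsto seq Filter.atTop (nhds (1, 1)) := by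
      have h0 : Filter.Tendsto (fun n : ℕ => (1 / (n + 1) : ℝ)) Filter.atTop (nhds 0) :=
        tendsto_one_div_add_atTop_nhds_zero_nat
      have hc : Continuous fun t : ℝ => Complex.exp ((t : ℂ) * Complex.I) := by fun_prop
      have hc' : Continuous fun t : ℝ => Complex.exp (-(t : ℂ) * Complex.I) := by
        fun_prop
      have e1 : Filter.Tendsto (fun n : ℕ => Complex.exp ((1 / (n + 1) : ℝ) * Complex.I))
          Filter.atTop (nhds 1) := by
        have := (hc.tendsto 0).comp h0
        simpa [Function.comp_def] using this
      have e2 : Filter.Tendsto (fun n : ℕ => Complex.exp (-((1 / (n + 1) : ℝ) : ℂ) * Complex.I))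
          Filter.atTop (nhds 1) := by
        have := (hc'.tendsto 0).comp h0
        simpa [Function.comp_def] using this
      exact (e1.prodMk_nhds e2 : _)
    have htendW : Filter.Tendsto seq Filter.atTop (nhdsWithin (1, 1) S) :=
      tendsto_nhdsWithin_of_tendsto_nhds_of_eventually_within seq htend
        (Filter.Eventually.of_forall hmemS)
    have hlim : Filter.Tendsto (fun n => knese (seq n)) Filter.atTop (nhds (knese (1, 1))) :=
      (hcont.tendsto).comp htendW
    have hconst : ∀ n, knese (seq n) = 1 := fun n => key _ (hne1 n)
    have h1 : Filter.Tendsto (fun n => knese (seq n)) Filter.atTop (nhds 1) := by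
      simp only [hconst]; exact tendsto_const_nhds
    have := tendsto_nhds_unique hlim h1
    rw [show knese (1, 1) = -1 by unfold knese; simp] at this
    norm_num at this
end

section
/- Let I be uncountable. A compact set K ⊆ T^I is a set of uniqueness for A(D̄^I) if and only if for every countably infinite subset F ⊆ I the projection of K onto T^F is a set of uniqueness for A(D̄^F). -/
open Complex Metric Set
attribute [local instance] Classical.propDecidable Classical.decEq

/-- Membership in `A(D̄^I)`: continuity on `D̄^I` for the product topology together with
separate membership in the disc algebra in each variable. -/
def MemPolydiscAlgebra {I : Type*} (f : (I → ℂ) → ℂ) : Prop :=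
  ContinuousOn f {z : I → ℂ | ∀ i, z i ∈ closedBall (0 : ℂ) 1} ∧
  ∀ i₀ : I, ∀ z : I → ℂ, (∀ i, z i ∈ closedBall (0 : ℂ) 1) →
    ContinuousOn (fun w => f (Function.update z i₀ w)) (closedBall (0 : ℂ) 1) ∧
    DifferentiableOn ℂ (fun w => f (Function.update z i₀ w)) (ball (0 : ℂ) 1)

/-- `K` is a set of uniqueness for `A(D̄^I)`. -/
def IsUniquenessSet {I : Type*} (K : Set (I → ℂ)) : Prop :=
  ∀ f g : (I → ℂ) → ℂ, MemPolydiscAlgebra f → MemPolydiscAlgebra g →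
    EqOn f g K → EqOn f g {z : I → ℂ | ∀ i, z i ∈ closedBall (0 : ℂ) 1}

namespace Stmt16Aux

open scoped Uniformity Topology

variable {I : Type*}

/-- The closed polydisc. -/
def PolyD (I : Type*) : Set (I → ℂ) := {z : I → ℂ | ∀ i, z i ∈ closedBall (0 : ℂ) 1}

lemma isCompact_polyD : IsCompact (PolyD I) := by
  have h : PolyD I = Set.pi Set.univ (fun _ : I => closedBall (0 : ℂ) 1) := by
    ext z; simp [PolyD, Set.mem_pi]
  rw [h]
  exact isCompact_univ_pi fun _ => isCompact_closedBall _ _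

/-- A function continuous on the polydisc depends (on the polydisc) on countably many
coordinates. -/
lemma exists_countable_dep {f : (I → ℂ) → ℂ} (hf : ContinuousOn f (PolyD I)) :
    ∃ J : Set I, J.Countable ∧ ∀ z w : I → ℂ, z ∈ PolyD I → w ∈ PolyD I →
      (∀ i ∈ J, z i = w i) → f z = f w := by
  have huc : UniformContinuousOn f (PolyD I) :=
    isCompact_polyD.uniformContinuousOn_of_continuous hf
  have key : ∀ ε : ℝ, 0 < ε → ∃ T : Set I, T.Finite ∧ ∀ z w : I → ℂ,
      z ∈ PolyD I → w ∈ PolyD I → (∀ i ∈ T, z i = w i) → dist (f z) (f w) < ε := by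
    intro ε hε
    have hmem : (fun x : (I → ℂ) × (I → ℂ) => (f x.1, f x.2)) ⁻¹'
        {p : ℂ × ℂ | dist p.1 p.2 < ε} ∈ 𝓤 (I → ℂ) ⊓ Filter.principal (PolyD I ×ˢ PolyD I) :=
      huc (dist_mem_uniformity hε)
    rw [Filter.mem_inf_iff] at hmem
    obtain ⟨U, hU, S, hS, hUS⟩ := hmem
    rw [Filter.mem_principal] at hS
    rw [Pi.uniformity, Filter.mem_iInf] at hU
    obtain ⟨T, hTfin, V, hV, rfl⟩ := hU
    choose W hW hWV using fun i : T => Filter.mem_comap.mp (hV i)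
    refine ⟨T, hTfin, fun z w hz hw hzw => ?_⟩
    have hzwU : (z, w) ∈ ⋂ i : T, V i := by
      refine Set.mem_iInter.2 fun i => hWV i ?_
      have : (z (i : I), w (i : I)) ∈ W i := by
        rw [hzw (i : I) i.2]
        exact refl_mem_uniformity (hW i)
      exact this
    have : (z, w) ∈ (fun x : (I → ℂ) × (I → ℂ) => (f x.1, f x.2)) ⁻¹'
        {p : ℂ × ℂ | dist p.1 p.2 < ε} := by
      rw [hUS]
      exact ⟨hzwU, hS (Set.mk_mem_prod hz hw)⟩
    exact this
  choose T hTfin hT using fun n : ℕ => key (1 / (n + 1)) (by positivity)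
  refine ⟨⋃ n, T n, Set.countable_iUnion fun n => (hTfin n).countable, fun z w hz hw hzw => ?_⟩
  by_contra hne
  obtain ⟨n, hn⟩ := exists_nat_one_div_lt (dist_pos.2 hne)
  exact absurd (hT n z w hz hw fun i hi => hzw i (Set.mem_iUnion.2 ⟨n, hi⟩)) (not_lt.2 hn.le)

variable (F : Set I)

/-- Extension of an `F`-indexed point to an `I`-indexed point by `0`. -/
noncomputable def ex0 (w : F → ℂ) : I → ℂ := fun i => if h : i ∈ F then w ⟨i, h⟩ else 0

/-- Projection. -/
def proj (z : I → ℂ) : F → ℂ := fun i => z (i : I)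

lemma continuous_ex0 : Continuous (ex0 F) := by
  refine continuous_pi fun i => ?_
  by_cases h : i ∈ F <;> simp only [ex0, h, dif_pos, dif_neg, not_false_iff]
  · exact continuous_apply _
  · exact continuous_const

lemma continuous_proj : Continuous (proj F) :=
  continuous_pi fun i => continuous_apply _

lemma ex0_mem_polyD {w : F → ℂ} (hw : w ∈ PolyD F) : ex0 F w ∈ PolyD I := by
  intro i
  by_cases h : i ∈ F <;> simp only [ex0, h, dif_pos, dif_neg, not_false_iff]
  · exact hw ⟨i, h⟩
  · simp

lemma proj_mem_polyD {z : I → ℂ} (hz : z ∈ PolyD I) : proj F z ∈ PolyD F := fun i => hz i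

lemma ex0_proj_eqOn (z : I → ℂ) : ∀ i ∈ F, ex0 F (proj F z) i = z i := by
  intro i hi; simp [ex0, proj, hi]

lemma proj_ex0 (w : F → ℂ) : proj F (ex0 F w) = w := by
  funext i; simp [ex0, proj, i.2]

lemma ex0_update {D1 : DecidableEq F} {D2 : DecidableEq I} (z : F → ℂ) (i₀ : F) (w : ℂ) :
    ex0 F (@Function.update _ _ D1 z i₀ w) = @Function.update _ _ D2 (ex0 F z) (i₀ : I) w := by
  funext i
  by_cases h : i ∈ F
  · by_cases h2 : (⟨i, h⟩ : F) = i₀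
    · have hi : i = (i₀ : I) := congrArg Subtype.val h2
      simp [ex0, h, Function.update_apply, h2, hi]
    · have : i ≠ (i₀ : I) := fun hc => h2 (Subtype.ext hc)
      simp [ex0, h, Function.update_apply, this, h2]
  · have : i ≠ (i₀ : I) := fun hc => h (hc ▸ i₀.2)
    simp [ex0, h, Function.update_apply, this]

lemma proj_update_mem {D1 : DecidableEq I} {D2 : DecidableEq F} (z : I → ℂ) (i₀ : I)
    (h : i₀ ∈ F) (w : ℂ) :
    proj F (@Function.update _ _ D1 z i₀ w) = @Function.update _ _ D2 (proj F z) ⟨i₀, h⟩ w := by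
  funext i
  by_cases h2 : i = (⟨i₀, h⟩ : F)
  · have hi : (i : I) = i₀ := congrArg Subtype.val h2
    simp [proj, Function.update_apply, h2, hi]
  · have : (i : I) ≠ i₀ := fun hc => h2 (Subtype.ext hc)
    simp [proj, Function.update_apply, this, h2]

lemma proj_update_not_mem {D1 : DecidableEq I} (z : I → ℂ) (i₀ : I) (h : i₀ ∉ F) (w : ℂ) :
    proj F (@Function.update _ _ D1 z i₀ w) = proj F z := by
  funext i
  have : (i : I) ≠ i₀ := fun hc => h (hc ▸ i.2)
  simp [proj, Function.update_apply, this]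

/-- Restriction of a member of the `I`-polydisc algebra along the extension map. -/
lemma mem_comp_ex0 {f : (I → ℂ) → ℂ} (hf : MemPolydiscAlgebra f) :
    MemPolydiscAlgebra (f ∘ ex0 F) := by
  constructor
  · exact hf.1.comp (continuous_ex0 F).continuousOn fun w hw => ex0_mem_polyD F hw
  · intro i₀ z hz
    have h := hf.2 (i₀ : I) (ex0 F z) (ex0_mem_polyD F hz)
    exact ⟨h.1.congr fun w _ => congrArg f (ex0_update F z i₀ w),
      h.2.congr fun w _ => congrArg f (ex0_update F z i₀ w)⟩

/-- Pullback of a member of the `F`-polydisc algebra along the projection. -/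
lemma mem_comp_proj {g : (F → ℂ) → ℂ} (hg : MemPolydiscAlgebra g) :
    MemPolydiscAlgebra (g ∘ proj F) := by
  constructor
  · exact hg.1.comp (continuous_proj F).continuousOn fun z hz => proj_mem_polyD F hz
  · intro i₀ z hz
    by_cases h : i₀ ∈ F
    · have h2 := hg.2 ⟨i₀, h⟩ (proj F z) (proj_mem_polyD F hz)
      exact ⟨h2.1.congr fun w _ => congrArg g (proj_update_mem F z i₀ h w),
        h2.2.congr fun w _ => congrArg g (proj_update_mem F z i₀ h w)⟩
    · refine ⟨continuousOn_const.congr fun w _ =>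
        congrArg g (proj_update_not_mem F z i₀ h w),
        (differentiableOn_const (g (proj F z))).congr fun w _ =>
        congrArg g (proj_update_not_mem F z i₀ h w)⟩

end Stmt16Aux

open Stmt16Aux in
/-- for uncountable `I`, a compact `K ⊆ T^I` is a set of uniqueness for
`A(D̄^I)` if and only if for every countably infinite `F ⊆ I` the projection of `K` to
`T^F` is a set of uniqueness for `A(D̄^F)`. -/
theorem stmt16 {I : Type*} [Uncountable I] (K : Set (I → ℂ)) (hKc : IsCompact K)
    (hKT : K ⊆ {z : I → ℂ | ∀ i, z i ∈ sphere (0 : ℂ) 1}) :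
    IsUniquenessSet K ↔
      ∀ F : Set I, F.Countable → F.Infinite →
        IsUniquenessSet ((fun z (i : F) => z (i : I)) '' K) := by
  have hKP : K ⊆ PolyD I := fun z hz i => sphere_subset_closedBall (hKT hz i)
  constructor
  · -- K uniqueness ⇒ projections are uniqueness sets
    intro hU F _ _ ft gt hft hgt hEq
    have hf : MemPolydiscAlgebra (ft ∘ proj F) := mem_comp_proj F hft
    have hg : MemPolydiscAlgebra (gt ∘ proj F) := mem_comp_proj F hgt
    have hEqK : EqOn (ft ∘ proj F) (gt ∘ proj F) K := fun z hz => hEq ⟨z, hz, rfl⟩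
    have hAll := hU _ _ hf hg hEqK
    intro w hw
    have h1 : ex0 F w ∈ PolyD I := ex0_mem_polyD F hw
    have h2 := hAll h1
    simpa [Function.comp, proj_ex0] using h2
  · -- converse
    intro h f g hf hg hEq z hz
    obtain ⟨Jf, hJfc, hJf⟩ := exists_countable_dep hf.1
    obtain ⟨Jg, hJgc, hJg⟩ := exists_countable_dep hg.1
    let e := Infinite.natEmbedding I
    have hNinf : (Set.range e).Infinite := Set.infinite_range_of_injective e.injective
    set F : Set I := Jf ∪ Jg ∪ Set.range e with hF
    have hFc : F.Countable := ((hJfc.union hJgc).union (Set.countable_range e))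
    have hFinf : F.Infinite := hNinf.mono fun x hx => Or.inr hx
    have hUF := h F hFc hFinf
    have hJfF : Jf ⊆ F := fun i hi => Or.inl (Or.inl hi)
    have hJgF : Jg ⊆ F := fun i hi => Or.inl (Or.inr hi)
    have hfF : MemPolydiscAlgebra (f ∘ ex0 F) := mem_comp_ex0 F hf
    have hgF : MemPolydiscAlgebra (g ∘ ex0 F) := mem_comp_ex0 F hg
    have hEqProj : EqOn (f ∘ ex0 F) (g ∘ ex0 F) ((fun z (i : F) => z (i : I)) '' K) := by
      rintro _ ⟨x, hx, rfl⟩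
      have hxP : x ∈ PolyD I := hKP hx
      have hextP : ex0 F (proj F x) ∈ PolyD I := ex0_mem_polyD F (proj_mem_polyD F hxP)
      have hagree : ∀ i ∈ F, ex0 F (proj F x) i = x i := ex0_proj_eqOn F x
      have h1 : f (ex0 F (proj F x)) = f x :=
        hJf _ _ hextP hxP fun i hi => hagree i (hJfF hi)
      have h2 : g (ex0 F (proj F x)) = g x :=
        hJg _ _ hextP hxP fun i hi => hagree i (hJgF hi)
      show f (ex0 F (proj F x)) = g (ex0 F (proj F x))
      rw [h1, h2]
      exact hEq hx
    have hAll := hUF _ _ hfF hgF hEqProj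
    have hzproj : proj F z ∈ PolyD F := proj_mem_polyD F hz
    have hextP : ex0 F (proj F z) ∈ PolyD I := ex0_mem_polyD F hzproj
    have hagree : ∀ i ∈ F, ex0 F (proj F z) i = z i := ex0_proj_eqOn F z
    have h1 : f (ex0 F (proj F z)) = f z :=
      hJf _ _ hextP hz fun i hi => hagree i (hJfF hi)
    have h2 : g (ex0 F (proj F z)) = g z :=
      hJg _ _ hextP hz fun i hi => hagree i (hJgF hi)
    have h3 := hAll hzproj
    simp only [Function.comp] at h3
    rw [← h1, ← h2]
    exact h3
end

section
/- Let I be a nonempty set with a partition (I_j)_{j∈J}, and for each j let K_j ⊆ T^{I_j} be a compact set of uniqueness for A(D̄^{I_j}). Then the product K = ∏_{j∈J} K_j ⊆ T^I is a set of uniqueness for A(D̄^I). -/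
open Complex Metric Set
attribute [local instance] Classical.propDecidable Classical.decEq

/-- Constant functions lie in the polydisc algebra. -/
lemma memPolydiscAlgebra_const {I : Type*} (c : ℂ) :
    MemPolydiscAlgebra (fun _ : I → ℂ => c) :=
  ⟨continuousOn_const, fun _ _ _ => ⟨continuousOn_const, differentiableOn_const _⟩⟩

/-- A set of uniqueness is nonempty. -/
lemma IsUniquenessSet.nonempty {I : Type*} {K : Set (I → ℂ)} (h : IsUniquenessSet K) :
    K.Nonempty := by
  by_contra hne
  rw [Set.not_nonempty_iff_eq_empty] at hne
  have := h (fun _ => (0 : ℂ)) (fun _ => (1 : ℂ)) (memPolydiscAlgebra_const 0)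
    (memPolydiscAlgebra_const 1) (by simp [hne, Set.EqOn])
    (show (fun _ : I => (0 : ℂ)) ∈ _ from fun i => mem_closedBall_self zero_le_one)
  simpa using this

/-- if `(I_j)_{j∈J}` is a partition of a nonempty set `I` and for each `j`
the set `K_j ⊆ T^{I_j}` is a compact set of uniqueness for `A(D̄^{I_j})`, then the product
`K = ∏_j K_j ⊆ T^I` is a set of uniqueness for `A(D̄^I)`. -/
theorem stmt18 {I : Type*} [Nonempty I] {J : Type*} (Ipart : J → Set I)
    (hdisj : Pairwise (Function.onFun Disjoint Ipart)) (hcover : (⋃ j, Ipart j) = univ)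
    (Kj : ∀ j : J, Set ((Ipart j) → ℂ))
    (hKc : ∀ j, IsCompact (Kj j))
    (hKT : ∀ j, Kj j ⊆ {z : (Ipart j) → ℂ | ∀ i, z i ∈ sphere (0 : ℂ) 1})
    (hKu : ∀ j, IsUniquenessSet (Kj j)) :
    IsUniquenessSet {z : I → ℂ | ∀ j : J, (fun i : Ipart j => z (i : I)) ∈ Kj j} := by
  -- every point of `Kj j` lies in the closed polydisc
  have hKpd : ∀ j, ∀ w ∈ Kj j, ∀ i, w i ∈ closedBall (0 : ℂ) 1 := by
    intro j w hw i
    exact le_of_eq (hKT j hw i)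
  -- the block of each index
  have hcov : ∀ i : I, ∃ j, i ∈ Ipart j := by
    intro i
    have : i ∈ ⋃ j, Ipart j := hcover ▸ mem_univ i
    exact mem_iUnion.1 this
  set ji : I → J := fun i => (hcov i).choose with hji_def
  have hji : ∀ i, i ∈ Ipart (ji i) := fun i => (hcov i).choose_spec
  have huniq : ∀ (i : I) (j : J), i ∈ Ipart j → ji i = j := by
    intro i j hij
    by_contra hne
    exact (Set.disjoint_left.mp (hdisj hne)) (hji i) hij
  -- a chosen point of each `Kj j`
  have hk : ∀ j, ∃ w, w ∈ Kj j := fun j => (hKu j).nonempty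
  set k : ∀ j, (Ipart j → ℂ) := fun j => (hk j).choose with hk_def
  have hkmem : ∀ j, k j ∈ Kj j := fun j => (hk j).choose_spec
  set c : I → ℂ := fun i => k (ji i) ⟨i, hji i⟩ with hc_def
  have hc : ∀ (j : J) (i : I) (h : i ∈ Ipart j), c i = k j ⟨i, h⟩ := by
    intro j i h
    have e : ji i = j := huniq i j h
    subst e
    rfl
  intro f g hf hg hfg
  -- Step 1: key finite induction
  have key : ∀ F : Finset J, ∀ z : I → ℂ, (∀ i, z i ∈ closedBall (0 : ℂ) 1) →
      (∀ j ∉ F, (fun i : Ipart j => z (i : I)) ∈ Kj j) → f z = g z := by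
    intro F
    induction F using Finset.induction_on with
    | empty =>
      intro z hz hK
      exact hfg (fun j => hK j (Finset.notMem_empty j))
    | @insert j0 F hj0 ih =>
      intro z hz hK
      set Z : ((Ipart j0) → ℂ) → I → ℂ :=
        fun w i => if h : i ∈ Ipart j0 then w ⟨i, h⟩ else z i with hZ_def
      have hZcont : Continuous Z := by
        refine continuous_pi fun i => ?_
        by_cases h : i ∈ Ipart j0
        · simpa [hZ_def, h] using continuous_apply (⟨i, h⟩ : Ipart j0)
        · simpa [hZ_def, h] using continuous_const
      have hZmem : ∀ w : (Ipart j0) → ℂ, (∀ i, w i ∈ closedBall (0 : ℂ) 1) →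
          ∀ i, Z w i ∈ closedBall (0 : ℂ) 1 := by
        intro w hw i
        by_cases h : i ∈ Ipart j0 <;> simp only [hZ_def, h, dif_pos, dif_neg, not_false_iff]
        · exact hw _
        · exact hz i
      have hZupd : ∀ (inst : DecidableEq (Ipart j0)) (w : (Ipart j0) → ℂ)
          (i₀ : Ipart j0) (u : ℂ),
          Z (@Function.update _ _ inst w i₀ u) = Function.update (Z w) (i₀ : I) u := by
        intro inst w i₀ u
        funext i
        by_cases h : i ∈ Ipart j0
        · by_cases hii : i = (i₀ : I)
          · have : (⟨i, h⟩ : Ipart j0) = i₀ := Subtype.ext hii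
            simp [hZ_def, h, this, hii, Function.update_apply]
          · have : (⟨i, h⟩ : Ipart j0) ≠ i₀ := fun e => hii (congrArg Subtype.val e)
            simp [hZ_def, h, this, hii, Function.update_apply]
        · have hii : i ≠ (i₀ : I) := fun e => h (e ▸ i₀.2)
          simp [hZ_def, h, hii, Function.update_apply]
      have memZ : ∀ h : (I → ℂ) → ℂ, MemPolydiscAlgebra h →
          MemPolydiscAlgebra (fun w => h (Z w)) := by
        intro h hh
        constructor
        · exact hh.1.comp hZcont.continuousOn (fun w hw => hZmem w hw)
        · intro i₀ w hw
          have h2 := hh.2 (i₀ : I) (Z w) (hZmem w hw)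
          constructor
          · exact h2.1.congr fun u _ => congrArg h (hZupd _ w i₀ u)
          · exact h2.2.congr fun u _ => congrArg h (hZupd _ w i₀ u)
      have heqK : EqOn (fun w => f (Z w)) (fun w => g (Z w)) (Kj j0) := by
        intro w hw
        have hwpd : ∀ i, w i ∈ closedBall (0 : ℂ) 1 := hKpd j0 w hw
        refine ih (Z w) (hZmem w hwpd) ?_
        intro j hjF
        by_cases hjj : j = j0
        · subst hjj
          have : (fun i : Ipart j => Z w (i : I)) = w := by
            funext i
            simp [hZ_def, i.2]
          rw [this]; exact hw
        · have : (fun i : Ipart j => Z w (i : I)) = fun i : Ipart j => z (i : I) := by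
            funext i
            have hni : (i : I) ∉ Ipart j0 := fun hni =>
              (Set.disjoint_left.mp (hdisj hjj)) i.2 hni
            simp [hZ_def, hni]
          rw [this]
          exact hK j (by simp [hjF, hjj])
      have hres := hKu j0 _ _ (memZ f hf) (memZ g hg) heqK
        (show (fun i : Ipart j0 => z (i : I)) ∈ _ from fun i => hz (i : I))
      have hZz : Z (fun i : Ipart j0 => z (i : I)) = z := by
        funext i
        by_cases h : i ∈ Ipart j0 <;> simp [hZ_def, h]
      simpa [hZz] using hres
  -- Step 2: density argument
  intro z hz
  set zt : Finset I → (I → ℂ) :=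
    fun t i => if ji i ∈ t.image ji then z i else c i with hzt_def
  have hztpd : ∀ t, ∀ i, zt t i ∈ closedBall (0 : ℂ) 1 := by
    intro t i
    by_cases h : ji i ∈ t.image ji <;> simp only [hzt_def, h, if_pos, if_neg, not_false_iff]
    · exact hz i
    · exact le_of_eq (hKT (ji i) (hkmem (ji i)) ⟨i, hji i⟩)
  have hzteq : ∀ t, f (zt t) = g (zt t) := by
    intro t
    refine key (t.image ji) (zt t) (hztpd t) ?_
    intro j hjF
    have : (fun i : Ipart j => zt t (i : I)) = k j := by
      funext i
      have hjii : ji (i : I) = j := huniq _ _ i.2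
      have : ji (i : I) ∉ t.image ji := by rw [hjii]; exact hjF
      simp only [hzt_def, this, if_neg, not_false_iff]
      rw [hc j (i : I) i.2]
    rw [this]
    exact hkmem j
  have hlim : Filter.Tendsto zt Filter.atTop (nhds z) := by
    rw [tendsto_pi_nhds]
    intro i
    refine tendsto_const_nhds.congr' ?_
    filter_upwards [Filter.eventually_ge_atTop ({i} : Finset I)] with t ht
    have hm : ji i ∈ t.image ji := Finset.mem_image_of_mem ji (ht (Finset.mem_singleton_self i))
    simp only [hzt_def]
    rw [if_pos hm]
  have hlimP : Filter.Tendsto zt Filter.atTop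
      (nhdsWithin z {z : I → ℂ | ∀ i, z i ∈ closedBall (0 : ℂ) 1}) := by
    refine tendsto_nhdsWithin_of_tendsto_nhds_of_eventually_within _ hlim ?_
    exact Filter.Eventually.of_forall fun t => hztpd t
  have hfz : Filter.Tendsto (fun t => f (zt t)) Filter.atTop (nhds (f z)) :=
    ((hf.1 z hz).tendsto).comp hlimP
  have hgz : Filter.Tendsto (fun t => g (zt t)) Filter.atTop (nhds (g z)) :=
    ((hg.1 z hz).tendsto).comp hlimP
  have : Filter.Tendsto (fun t => f (zt t)) Filter.atTop (nhds (g z)) := by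
    refine hgz.congr fun t => (hzteq t).symm
  exact tendsto_nhds_unique hfz this
end

section
/- Let f : D̄ⁿ → ℂ ∪ {∞} be continuous, holomorphic on Dⁿ away from f^{-1}(∞), and suppose that for each coordinate direction and each fixed value of the other coordinates the resulting one-variable function belongs to the extended disc algebra Ã(D̄). If f(ζ) = ∞ for some ζ in the open polydisc Dⁿ, then f ≡ ∞ on D̄ⁿ. -/
open Complex Metric Set
attribute [local instance] Classical.propDecidable Classical.decEq

/-- The finite part of a point of the Riemann sphere `OnePoint ℂ` (junk value `0` at `∞`). -/
def OnePoint.toC : OnePoint ℂ → ℂ := fun x =>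
  match x with
  | (some a : Option ℂ) => a
  | (none : Option ℂ) => 0

/-- Membership in the extended disc algebra `Ã(D̄)`: either identically `∞` on the closed
unit disc, or continuous on `D̄` (as a map into the Riemann sphere), finite on the open
disc, and holomorphic there. -/
def MemAtildeDisc (g : ℂ → OnePoint ℂ) : Prop :=
  (∀ z ∈ closedBall (0 : ℂ) 1, g z = OnePoint.infty) ∨
  (ContinuousOn g (closedBall (0 : ℂ) 1) ∧
    (∀ z ∈ ball (0 : ℂ) 1, g z ≠ OnePoint.infty) ∧
    DifferentiableOn ℂ (fun z => (g z).toC) (ball (0 : ℂ) 1))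

/-- if `f : D̄ⁿ → ℂ ∪ {∞}` is continuous, holomorphic on `Dⁿ` away from
`f⁻¹(∞)`, and separately in `Ã(D̄)` in each variable, and `f(ζ) = ∞` for some `ζ` in the
open polydisc, then `f ≡ ∞` on `D̄ⁿ`. -/
theorem stmt19 (n : ℕ) (f : (Fin n → ℂ) → OnePoint ℂ)
    (hf : ContinuousOn f {z : Fin n → ℂ | ∀ i, z i ∈ closedBall (0 : ℂ) 1})
    (hf' : DifferentiableOn ℂ (fun z => (f z).toC)
      {z : Fin n → ℂ | (∀ i, z i ∈ ball (0 : ℂ) 1) ∧ f z ≠ OnePoint.infty})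
    (hsep : ∀ k : Fin n, ∀ z : Fin n → ℂ, (∀ i, z i ∈ closedBall (0 : ℂ) 1) →
      MemAtildeDisc (fun w => f (Function.update z k w)))
    (ζ : Fin n → ℂ) (hζ : ∀ i, ζ i ∈ ball (0 : ℂ) 1) (hzinf : f ζ = OnePoint.infty) :
    ∀ z : Fin n → ℂ, (∀ i, z i ∈ closedBall (0 : ℂ) 1) → f z = OnePoint.infty := by
  intro z hz
  have key : ∀ m : ℕ, m ≤ n →
      f (fun i => if (i : ℕ) < m then z i else ζ i) = OnePoint.infty := by
    intro m
    induction m with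
    | zero =>
      intro _
      have : (fun i : Fin n => if (i : ℕ) < 0 then z i else ζ i) = ζ := by
        funext i; simp
      rw [this]; exact hzinf
    | succ m ih =>
      intro hm
      have hmn : m < n := hm
      set k : Fin n := ⟨m, hmn⟩ with hk
      set w₀ : Fin n → ℂ := fun i => if (i : ℕ) < m then z i else ζ i with hw₀def
      have hw₀ : ∀ i, w₀ i ∈ closedBall (0 : ℂ) 1 := by
        intro i
        by_cases h : (i : ℕ) < m
        · simpa [hw₀def, h] using hz i
        · simpa [hw₀def, h] using ball_subset_closedBall (hζ i)
      obtain h1 | h2 := hsep k w₀ hw₀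
      · have h0 := h1 (z k) (hz k)
        have heq : Function.update w₀ k (z k) =
            fun i : Fin n => if (i : ℕ) < m + 1 then z i else ζ i := by
          funext i
          by_cases hik : i = k
          · subst hik; simp [Function.update_self, hk]
          · have hik' : (i : ℕ) ≠ m := fun h => hik (Fin.ext h)
            rw [Function.update_of_ne hik]
            by_cases h : (i : ℕ) < m
            · have : (i : ℕ) < m + 1 := Nat.lt_succ_of_lt h
              simp [hw₀def, h, this]
            · have : ¬ (i : ℕ) < m + 1 := by omega
              simp [hw₀def, h, this]
        simpa only [heq] using h0
      · exfalso
        have hfin := h2.2.1 (ζ k) (hζ k)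
        apply hfin
        have heq : Function.update w₀ k (ζ k) = w₀ := by
          funext i
          by_cases hik : i = k
          · subst hik; simp [Function.update_self, hw₀def, hk]
          · rw [Function.update_of_ne hik]
        show f (Function.update w₀ k (ζ k)) = OnePoint.infty
        rw [heq]
        exact ih (Nat.le_of_lt hmn)
  have h := key n le_rfl
  have : (fun i : Fin n => if (i : ℕ) < n then z i else ζ i) = z := by
    funext i; simp [i.isLt]
  rwa [this] at h
end
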